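/- Fix k ≥ 1 and E ⊆ {0,...,k}. For n ≥ k and y = j/n with 0 ≤ j ≤ n, define b^{(n)}(y) = Σ_{i=0}^k (k·1_{i∈E} - i)·[C(ny,i)·C(n-ny,k-i)/C(n,k)] and b(y) = Σ_{i=0}^k (k·1_{i∈E} - i)·C(k,i)·y^i·(1-y)^{k-i}. Then there exists a constant c depending only on k and E such that sup_{j} |b^{(n)}(j/n) - b(j/n)| ≤ c/n. -/

import Mathlib

open Finset

lemma prod_abs_sub (m : ℕ) (f g : ℕ → ℝ)
    (hf0 : ∀ l < m, 0 ≤ f l) (hf1 : ∀ l < m, f l ≤ 1)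
    (hg0 : ∀ l < m, 0 ≤ g l) (hg1 : ∀ l < m, g l ≤ 1) :
    |∏ l ∈ range m, f l - ∏ l ∈ range m, g l| ≤ ∑ l ∈ range m, |f l - g l| := by
  induction m with
  | zero => simp
  | succ m ih =>
    rw [prod_range_succ, prod_range_succ, sum_range_succ]
    have hP0 : 0 ≤ ∏ l ∈ range m, f l := prod_nonneg fun l hl => hf0 l (by simp at hl; omega)
    have hP1 : ∏ l ∈ range m, f l ≤ 1 :=
      prod_le_one (fun l hl => hf0 l (by simp at hl; omega)) (fun l hl => hf1 l (by simp at hl; omega))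
    have hgm0 : 0 ≤ g m := hg0 m (by omega)
    have hgm1 : g m ≤ 1 := hg1 m (by omega)
    have ih' := ih (fun l hl => hf0 l (by omega)) (fun l hl => hf1 l (by omega))
      (fun l hl => hg0 l (by omega)) (fun l hl => hg1 l (by omega))
    calc |(∏ l ∈ range m, f l) * f m - (∏ l ∈ range m, g l) * g m|
        = |(f m - g m) * ∏ l ∈ range m, f l + g m * ((∏ l ∈ range m, f l) - ∏ l ∈ range m, g l)| := by ring_nf
      _ ≤ |(f m - g m) * ∏ l ∈ range m, f l| + |g m * ((∏ l ∈ range m, f l) - ∏ l ∈ range m, g l)| := abs_add_le _ _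
      _ ≤ |f m - g m| * 1 + 1 * |(∏ l ∈ range m, f l) - ∏ l ∈ range m, g l| := by
          rw [abs_mul, abs_mul]
          gcongr
          · rw [abs_of_nonneg hP0]; exact hP1
          · rw [abs_of_nonneg hgm0]; exact hgm1
      _ ≤ (∑ l ∈ range m, |f l - g l|) + |f m - g m| := by rw [one_mul, mul_one]; linarith

lemma frac_bound (n k l d b : ℝ) (hk : 1 ≤ k) (hkn : k ≤ n) (hl : 0 ≤ l)
    (hlk : l ≤ k - 1) (hd : 0 ≤ d) (hdl : d ≤ l) (hb0 : 0 ≤ b) (hbn : b ≤ n) :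
    |(b - d)/(n - l) - b/n| ≤ 2*k^2/n := by
  have hn : (0:ℝ) < n := lt_of_lt_of_le (by linarith) hkn
  have hnl : (0:ℝ) < n - l := by linarith
  rw [div_sub_div _ _ (ne_of_gt hnl) (ne_of_gt hn), abs_div,
    abs_of_pos (by positivity : (0:ℝ) < (n-l)*n), div_le_div_iff₀ (by positivity) hn]
  have habs : |(b - d)*n - (n-l)*b| ≤ k*n := by
    rw [abs_le]
    constructor
    · nlinarith [mul_nonneg hl hb0]
    · nlinarith [mul_nonneg hd hn.le, mul_nonneg hl hb0, mul_nonneg hd hn.le]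
  have hkey : (0:ℝ) ≤ (k-1)*(n-k) := mul_nonneg (by linarith) (by linarith)
  calc |(b - d)*n - (n-l)*b| * n ≤ (k*n) * n := by
        apply mul_le_mul_of_nonneg_right habs hn.le
    _ ≤ 2*k^2 * ((n-l)*n) := by
        nlinarith [mul_nonneg (mul_nonneg (mul_nonneg hkey hn.le) (by linarith : (0:ℝ) ≤ k)) hn.le,
          mul_nonneg (mul_nonneg (mul_nonneg (sq_nonneg k) (by linarith : (0:ℝ) ≤ (k-1)-l)) hn.le) hn.le,
          mul_pos (mul_pos hn hn) (lt_of_lt_of_le one_pos hk)]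

lemma key (k n j i : ℕ) (hk : 1 ≤ k) (hi : i ≤ k) (hkn : k ≤ n) (hjn : j ≤ n) :
    |(j.choose i : ℝ) * ((n-j).choose (k-i) : ℝ) / (n.choose k : ℝ) -
     (k.choose i : ℝ) * ((j:ℝ)/n)^i * (1-(j:ℝ)/n)^(k-i)| ≤ (k.choose i : ℝ) * (2*k^3) / n := by
  have hn1 : 1 ≤ n := le_trans hk hkn
  have hn : (0:ℝ) < n := by exact_mod_cast Nat.lt_of_lt_of_le Nat.zero_lt_one hn1
  have hone : (1:ℝ) - (j:ℝ)/n = ((n:ℝ) - j)/n := by field_simp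
  have hjr : (j:ℝ) ≤ n := by exact_mod_cast hjn
  have hchoosepos : (0:ℝ) < (k.choose i : ℝ) := by exact_mod_cast Nat.choose_pos hi
  rw [hone]
  by_cases hA : i ≤ j ∧ k - i ≤ n - j
  · obtain ⟨hij, hkinj⟩ := hA
    have hfilt1 : (Finset.range k).filter (fun l => l < i) = Finset.range i := by
      ext l; simp; omega
    have hfilt2 : (Finset.range k).filter (fun l => ¬ l < i) = Finset.Ico i k := by
      ext l; simp; omega
    set num : ℕ → ℝ := fun l => if l < i then (j:ℝ) - l else ((n:ℝ) - j) - ((l:ℝ) - i) with hnum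
    set B : ℕ → ℝ := fun l => if l < i then (j:ℝ)/n else ((n:ℝ)-j)/n with hB
    have e1 : (j.descFactorial i : ℝ) = ∏ l ∈ range i, ((j:ℝ) - l) := by
      rw [Nat.descFactorial_eq_prod_range, Nat.cast_prod]
      refine prod_congr rfl fun l hl => ?_
      simp only [mem_range] at hl
      rw [Nat.cast_sub (by omega)]
    have e2 : ((n-j).descFactorial (k-i) : ℝ) = ∏ l ∈ range (k-i), ((n:ℝ) - j - l) := by
      rw [Nat.descFactorial_eq_prod_range, Nat.cast_prod]
      refine prod_congr rfl fun l hl => ?_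
      simp only [mem_range] at hl
      rw [Nat.cast_sub (by omega), Nat.cast_sub (by omega)]
    have hden : ((n.descFactorial k : ℕ) : ℝ) = ∏ l ∈ range k, ((n:ℝ) - l) := by
      rw [Nat.descFactorial_eq_prod_range, Nat.cast_prod]
      refine prod_congr rfl fun l hl => ?_
      simp only [mem_range] at hl
      rw [Nat.cast_sub (by omega)]
    have hprodnum : ∏ l ∈ range k, num l
        = (j.descFactorial i : ℝ) * ((n-j).descFactorial (k-i) : ℝ) := by
      rw [hnum, prod_ite, hfilt1, hfilt2, e1, e2, Finset.prod_Ico_eq_prod_range]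
      congr 1
      refine prod_congr rfl fun l hl => ?_
      push_cast; ring
    have hprodA : ∏ l ∈ range k, (num l / ((n:ℝ) - l))
        = (j.descFactorial i : ℝ) * ((n-j).descFactorial (k-i) : ℝ) / (n.descFactorial k : ℝ) := by
      rw [prod_div_distrib, hprodnum, hden]
    have c1 : (j.descFactorial i : ℝ) = (i.factorial : ℝ) * j.choose i := by
      exact_mod_cast congrArg (Nat.cast (R := ℝ)) (Nat.descFactorial_eq_factorial_mul_choose j i)
    have c2 : ((n-j).descFactorial (k-i) : ℝ) = ((k-i).factorial : ℝ) * (n-j).choose (k-i) := by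
      exact_mod_cast congrArg (Nat.cast (R := ℝ)) (Nat.descFactorial_eq_factorial_mul_choose (n-j) (k-i))
    have c3 : (n.descFactorial k : ℝ) = (k.factorial : ℝ) * n.choose k := by
      exact_mod_cast congrArg (Nat.cast (R := ℝ)) (Nat.descFactorial_eq_factorial_mul_choose n k)
    have c4 : (k.choose i : ℝ) * i.factorial * (k-i).factorial = k.factorial := by
      exact_mod_cast Nat.choose_mul_factorial_mul_factorial hi
    have hnck : (0:ℝ) < (n.choose k : ℝ) := by exact_mod_cast Nat.choose_pos hkn
    have hfi : (0:ℝ) < (i.factorial : ℝ) := by exact_mod_cast i.factorial_pos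
    have hfki : (0:ℝ) < ((k-i).factorial : ℝ) := by exact_mod_cast (k-i).factorial_pos
    have hfk : (0:ℝ) < (k.factorial : ℝ) := by exact_mod_cast k.factorial_pos
    have hH : (j.choose i : ℝ) * ((n-j).choose (k-i) : ℝ) / (n.choose k : ℝ)
        = (k.choose i : ℝ) * ∏ l ∈ range k, (num l / ((n:ℝ) - l)) := by
      rw [hprodA, c1, c2, c3]
      field_simp
      linear_combination (-(1:ℝ) * (j.choose i : ℝ) * ((n-j).choose (k-i) : ℝ)) * c4
    have hBprod : ((j:ℝ)/n)^i * (((n:ℝ)-j)/n)^(k-i) = ∏ l ∈ range k, B l := by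
      rw [hB, prod_ite, hfilt1, hfilt2, prod_const, prod_const, card_range, Nat.card_Ico]
    -- bounds on factors
    have hklr : ∀ l, l < k → (l:ℝ) < (n:ℝ) := by
      intro l hl; exact_mod_cast lt_of_lt_of_le hl hkn
    have hA0 : ∀ l < k, 0 ≤ num l / ((n:ℝ) - l) := by
      intro l hl
      have := hklr l hl
      apply div_nonneg ?_ (by linarith)
      simp only [hnum]
      split
      · have : (l:ℝ) ≤ (j:ℝ) := by exact_mod_cast le_of_lt (lt_of_lt_of_le (by assumption) hij)
        linarith
      · have h1 : (i:ℝ) ≤ (l:ℝ) := by exact_mod_cast Nat.le_of_not_lt (by assumption)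
        have h2 : (l:ℝ) + 1 ≤ (k:ℝ) := by exact_mod_cast hl
        have h3 : (k:ℝ) - i ≤ (n:ℝ) - j := by
          have := hkinj
          have h4 : ((k - i : ℕ) : ℝ) ≤ ((n - j : ℕ) : ℝ) := by exact_mod_cast this
          rw [Nat.cast_sub hi, Nat.cast_sub hjn] at h4
          exact h4
        linarith
    have hA1 : ∀ l < k, num l / ((n:ℝ) - l) ≤ 1 := by
      intro l hl
      have hln := hklr l hl
      rw [div_le_one (by linarith)]
      simp only [hnum]
      split
      · linarith
      · have h1 : (i:ℝ) ≤ (j:ℝ) := by exact_mod_cast hij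
        linarith
    have hB0 : ∀ l < k, 0 ≤ B l := by
      intro l hl
      simp only [hB]
      split
      · positivity
      · apply div_nonneg (by linarith) hn.le
    have hB1 : ∀ l < k, B l ≤ 1 := by
      intro l hl
      simp only [hB]
      split
      · rw [div_le_one hn]; exact hjr
      · rw [div_le_one hn]; linarith
    have hdiff : ∀ l < k, |num l / ((n:ℝ) - l) - B l| ≤ 2*(k:ℝ)^2/n := by
      intro l hl
      have hk1 : (1:ℝ) ≤ (k:ℝ) := by exact_mod_cast hk
      have hknr : (k:ℝ) ≤ (n:ℝ) := by exact_mod_cast hkn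
      have hlk1 : (l:ℝ) ≤ (k:ℝ) - 1 := by
        have : (l:ℝ) + 1 ≤ (k:ℝ) := by exact_mod_cast hl
        linarith
      simp only [hnum, hB]
      by_cases hli : l < i
      · simp only [if_pos hli]
        exact frac_bound (n:ℝ) (k:ℝ) (l:ℝ) (l:ℝ) (j:ℝ) hk1 hknr (by positivity) hlk1
          (by positivity) le_rfl (by positivity) hjr
      · simp only [if_neg hli]
        have h1 : (i:ℝ) ≤ (l:ℝ) := by exact_mod_cast Nat.le_of_not_lt hli
        exact frac_bound (n:ℝ) (k:ℝ) (l:ℝ) ((l:ℝ) - i) ((n:ℝ) - j) hk1 hknr (by positivity) hlk1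
          (by linarith) (by linarith) (by linarith) (by linarith)
    have hsum : ∑ l ∈ range k, |num l / ((n:ℝ) - l) - B l| ≤ (k:ℝ) * (2*(k:ℝ)^2/n) := by
      calc ∑ l ∈ range k, |num l / ((n:ℝ) - l) - B l| ≤ ∑ l ∈ range k, 2*(k:ℝ)^2/n := by
            refine sum_le_sum fun l hl => hdiff l (mem_range.mp hl)
        _ = (k:ℝ) * (2*(k:ℝ)^2/n) := by
            rw [sum_const, card_range, nsmul_eq_mul]
    have hmain := prod_abs_sub k (fun l => num l / ((n:ℝ) - l)) B hA0 hA1 hB0 hB1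
    rw [hH, mul_assoc, hBprod, ← mul_sub, abs_mul, abs_of_nonneg hchoosepos.le]
    calc (k.choose i : ℝ) * |(∏ l ∈ range k, num l / ((n:ℝ) - l)) - ∏ l ∈ range k, B l|
        ≤ (k.choose i : ℝ) * ((k:ℝ) * (2*(k:ℝ)^2/n)) := by
          apply mul_le_mul_of_nonneg_left (le_trans hmain hsum) hchoosepos.le
      _ = (k.choose i : ℝ) * (2*(k:ℝ)^3) / n := by ring
  · -- degenerate case: hypergeometric term is zero
    rw [not_and_or] at hA
    have hzero : (j.choose i : ℝ) * ((n-j).choose (k-i) : ℝ) = 0 := by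
      rcases hA with h | h
      · rw [Nat.choose_eq_zero_of_lt (show j < i by omega)]; simp
      · rw [Nat.choose_eq_zero_of_lt (show n - j < k - i by omega)]; simp
    rw [hzero, zero_div, zero_sub, abs_neg]
    have hb0 : (0:ℝ) ≤ (j:ℝ)/n := by positivity
    have hb1 : (j:ℝ)/n ≤ 1 := by rw [div_le_one hn]; exact hjr
    have hc0 : (0:ℝ) ≤ ((n:ℝ)-j)/n := by
      apply div_nonneg (by linarith) hn.le
    have hc1 : ((n:ℝ)-j)/n ≤ 1 := by rw [div_le_one hn]; linarith
    have habs : |(k.choose i : ℝ) * ((j:ℝ)/n)^i * (((n:ℝ)-j)/n)^(k-i)|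
        = (k.choose i : ℝ) * ((j:ℝ)/n)^i * (((n:ℝ)-j)/n)^(k-i) := by
      apply abs_of_nonneg; positivity
    rw [habs]
    have hkey : ((j:ℝ)/n)^i * (((n:ℝ)-j)/n)^(k-i) ≤ (k:ℝ)/n := by
      rcases hA with h | h
      · push_neg at h
        have hi1 : 1 ≤ i := by omega
        have : ((j:ℝ)/n)^i ≤ (j:ℝ)/n := pow_le_of_le_one hb0 hb1 (by omega)
        have hjk : (j:ℝ)/n ≤ (k:ℝ)/n := by
          gcongr
          exact_mod_cast (show j ≤ k by omega)
        calc ((j:ℝ)/n)^i * (((n:ℝ)-j)/n)^(k-i) ≤ ((j:ℝ)/n) * 1 := by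
              apply mul_le_mul this (pow_le_one₀ hc0 hc1) (by positivity) hb0
          _ ≤ (k:ℝ)/n := by rw [mul_one]; exact hjk
      · push_neg at h
        have hki1 : 1 ≤ k - i := by omega
        have hnjk : ((n:ℝ)-j) ≤ (k:ℝ) := by
          have : n - j < k := by omega
          have h2 : ((n-j : ℕ) : ℝ) = (n:ℝ) - j := by
            rw [Nat.cast_sub hjn]
          rw [← h2]; exact_mod_cast this.le
        have : (((n:ℝ)-j)/n)^(k-i) ≤ ((n:ℝ)-j)/n := pow_le_of_le_one hc0 hc1 (by omega)
        calc ((j:ℝ)/n)^i * (((n:ℝ)-j)/n)^(k-i) ≤ 1 * (((n:ℝ)-j)/n) := by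
              apply mul_le_mul (pow_le_one₀ hb0 hb1) this (by positivity) (by norm_num)
          _ ≤ (k:ℝ)/n := by rw [one_mul]; gcongr
    calc (k.choose i : ℝ) * ((j:ℝ)/n)^i * (((n:ℝ)-j)/n)^(k-i)
        ≤ (k.choose i : ℝ) * ((k:ℝ)/n) := by
          rw [mul_assoc]; exact mul_le_mul_of_nonneg_left hkey hchoosepos.le
      _ ≤ (k.choose i : ℝ) * (2*k^3) / n := by
          rw [mul_div_assoc]
          apply mul_le_mul_of_nonneg_left ?_ hchoosepos.le
          gcongr ?_/(n:ℝ)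
          have hk1 : (1:ℝ) ≤ k := by exact_mod_cast hk
          nlinarith [mul_nonneg (by nlinarith : (0:ℝ) ≤ (k:ℝ)^2 - 1) (by linarith : (0:ℝ) ≤ (k:ℝ))]

theorem stmt_15 (k : ℕ) (hk : 1 ≤ k) (E : Finset ℕ) (hE : E ⊆ Finset.range (k+1)) :
    ∃ c : ℝ, ∀ n : ℕ, k ≤ n → ∀ j : ℕ, j ≤ n →
      |(∑ i ∈ Finset.range (k+1),
          ((k:ℝ) * (if i ∈ E then 1 else 0) - i) *
            ((j.choose i : ℝ) * ((n-j).choose (k-i) : ℝ) / (n.choose k : ℝ))) -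
        (∑ i ∈ Finset.range (k+1),
          ((k:ℝ) * (if i ∈ E then 1 else 0) - i) *
            ((k.choose i : ℝ) * ((j:ℝ)/n)^i * (1-(j:ℝ)/n)^(k-i)))|
        ≤ c / n := by
  refine ⟨((k:ℝ)+1) * ((k:ℝ) * ((2:ℝ)^k * (2*(k:ℝ)^3))), ?_⟩
  intro n hkn j hjn
  have hn1 : 1 ≤ n := le_trans hk hkn
  have hn : (0:ℝ) < n := by exact_mod_cast Nat.lt_of_lt_of_le Nat.zero_lt_one hn1
  rw [← Finset.sum_sub_distrib]
  refine le_trans (Finset.abs_sum_le_sum_abs _ _) ?_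
  have per : ∀ i ∈ Finset.range (k+1),
      |((k:ℝ) * (if i ∈ E then 1 else 0) - i) *
            ((j.choose i : ℝ) * ((n-j).choose (k-i) : ℝ) / (n.choose k : ℝ)) -
        ((k:ℝ) * (if i ∈ E then 1 else 0) - i) *
            ((k.choose i : ℝ) * ((j:ℝ)/n)^i * (1-(j:ℝ)/n)^(k-i))|
      ≤ (k:ℝ) * ((2:ℝ)^k * (2*(k:ℝ)^3)) / n := by
    intro i hi'
    have hik : i ≤ k := by simpa [Nat.lt_succ_iff] using hi'
    rw [← mul_sub, abs_mul]
    have hcoef : |(k:ℝ) * (if i ∈ E then 1 else 0) - i| ≤ (k:ℝ) := by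
      have hikr : (i:ℝ) ≤ (k:ℝ) := by exact_mod_cast hik
      have hi0 : (0:ℝ) ≤ (i:ℝ) := by positivity
      rw [abs_le]; constructor <;> split <;> linarith
    have hkey := key k n j i hk hik hkn hjn
    have hck : (k.choose i : ℝ) ≤ (2:ℝ)^k := by
      have : k.choose i ≤ 2^k := by
        rw [← Nat.sum_range_choose k]
        exact Finset.single_le_sum (fun _ _ => Nat.zero_le _) (Finset.mem_range.mpr (by omega))
      exact_mod_cast this
    have h2 : |(j.choose i : ℝ) * ((n-j).choose (k-i) : ℝ) / (n.choose k : ℝ) -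
        (k.choose i : ℝ) * ((j:ℝ)/n)^i * (1-(j:ℝ)/n)^(k-i)| ≤ (2:ℝ)^k * (2*(k:ℝ)^3) / n := by
      refine le_trans hkey ?_
      gcongr
    calc |(k:ℝ) * (if i ∈ E then 1 else 0) - i| *
          |(j.choose i : ℝ) * ((n-j).choose (k-i) : ℝ) / (n.choose k : ℝ) -
            (k.choose i : ℝ) * ((j:ℝ)/n)^i * (1-(j:ℝ)/n)^(k-i)|
        ≤ (k:ℝ) * ((2:ℝ)^k * (2*(k:ℝ)^3) / n) := by
          apply mul_le_mul hcoef h2 (abs_nonneg _) (by positivity)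
      _ = (k:ℝ) * ((2:ℝ)^k * (2*(k:ℝ)^3)) / n := by ring
  refine le_trans (Finset.sum_le_sum per) ?_
  rw [Finset.sum_const, Finset.card_range, nsmul_eq_mul]
  rw [mul_div_assoc, ← mul_div_assoc]
  apply le_of_eq
  push_cast
  ring
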